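/- For every weak composition a of length n, the fundamental slide polynomial satisfies 𝔉_a = Σ_b 𝔐_b, where the sum is over all weak compositions b of length n such that b strongly dominates a and flat(b) refines flat(a). -/

import Mathlib

open scoped Classical

namespace SlidePaper

/-- Sum of the first `i` entries of a weak composition of length `n`. -/
def psum {n : ℕ} (a : Fin n → ℕ) (i : ℕ) : ℕ :=
  ∑ j ∈ Finset.univ.filter (fun j : Fin n => (j : ℕ) < i), a j

/-- `b` dominates `a`: all partial sums of `b` are at least those of `a`. -/
def Dominates {n : ℕ} (b a : Fin n → ℕ) : Prop :=
  ∀ i : Fin (n + 1), psum a i ≤ psum b i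

/-- The flattening of a weak composition: the list of its nonzero entries in order. -/
def flat {n : ℕ} (a : Fin n → ℕ) : List ℕ :=
  (List.ofFn a).filter (fun x => x ≠ 0)

/-- `β` refines `α`: `β` splits into consecutive blocks with sums `α₁, α₂, …`. -/
def Refines (β α : List ℕ) : Prop :=
  ∃ L : List (List ℕ), L.flatten = β ∧ L.map List.sum = α

/-- All weak compositions of length `n` with entries at most `k`. -/
def wcFinset (n k : ℕ) : Finset (Fin n → ℕ) :=
  Fintype.piFinset fun _ => Finset.range (k + 1)

/-- The monomial slide polynomial `𝔐_a`. -/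
noncomputable def slideM {n : ℕ} (a : Fin n → ℕ) : MvPolynomial (Fin n) ℤ :=
  ∑ b ∈ (wcFinset n (∑ i, a i)).filter (fun b => Dominates b a ∧ flat b = flat a),
    MvPolynomial.monomial (Finsupp.equivFunOnFinite.symm b) 1

/-- The fundamental slide polynomial `𝔉_a`. -/
noncomputable def slideF {n : ℕ} (a : Fin n → ℕ) : MvPolynomial (Fin n) ℤ :=
  ∑ b ∈ (wcFinset n (∑ i, a i)).filter (fun b => Dominates b a ∧ Refines (flat b) (flat a)),
    MvPolynomial.monomial (Finsupp.equivFunOnFinite.symm b) 1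

/-- A weak composition is quasi-flat if its nonzero entries occupy consecutive positions. -/
def QuasiFlat {n : ℕ} (a : Fin n → ℕ) : Prop :=
  ∀ i j l : Fin n, i ≤ j → j ≤ l → a i ≠ 0 → a l ≠ 0 → a j ≠ 0

/-- `b` strongly dominates `a`. -/
def StronglyDominates {n : ℕ} (b a : Fin n → ℕ) : Prop :=
  Dominates b a ∧ ∀ c : Fin n → ℕ, Dominates c a → flat c = flat b → Dominates c b

/-- The exponent vector placing the parts of `α` at the positions `i`. -/
noncomputable def placeExp {n : ℕ} (α : List ℕ) (i : Fin α.length → Fin n) : Fin n →₀ ℕ :=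
  ∑ t : Fin α.length, Finsupp.single (i t) (α.get t)

/-- `f` is quasisymmetric in the variables `x_1, …, x_k` (0-indexed: `x_0, …, x_{k-1}`). -/
def IsQuasisymmetricIn {n : ℕ} (k : ℕ) (f : MvPolynomial (Fin n) ℤ) : Prop :=
  ∀ α : List ℕ, (∀ x ∈ α, 0 < x) →
    ∀ i j : Fin α.length → Fin n, StrictMono i → StrictMono j →
      (∀ t, (i t : ℕ) < k) → (∀ t, (j t : ℕ) < k) →
      MvPolynomial.coeff (placeExp α i) f = MvPolynomial.coeff (placeExp α j) f

/-- The monomial quasisymmetric polynomial `M_α(x_1, …, x_k)` inside `ℤ[x_1, …, x_n]`. -/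
noncomputable def Mqs (n k : ℕ) (α : List ℕ) : MvPolynomial (Fin n) ℤ :=
  ∑ i ∈ (Finset.univ : Finset (Fin α.length → Fin n)).filter
      (fun i : Fin α.length → Fin n => StrictMono i ∧ ∀ t, (i t : ℕ) < k),
    ∏ t : Fin α.length, (MvPolynomial.X (i t) : MvPolynomial (Fin n) ℤ) ^ α.get t

/-- The fundamental quasisymmetric polynomial `F_α(x_1, …, x_k)` inside `ℤ[x_1, …, x_n]`. -/
noncomputable def Fqs (n k : ℕ) (α : List ℕ) : MvPolynomial (Fin n) ℤ :=
  ∑ c ∈ (Finset.univ : Finset (Composition α.sum)).filter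
      (fun c => Refines c.blocks α ∧ c.blocks.length ≤ k),
    Mqs n k c.blocks

/-- Place the weak composition `a` (of length `N`) at offset `k` inside length `M`. -/
def shiftComp {N : ℕ} (k M : ℕ) (a : Fin N → ℕ) : Fin M → ℕ :=
  fun i => if h : k ≤ (i : ℕ) ∧ (i : ℕ) - k < N then a ⟨(i : ℕ) - k, h.2⟩ else 0

/-- Spread the values `g` to positions `ι` inside a weak composition of length `n`. -/
def spread {l n : ℕ} (ι : Fin l → Fin n) (g : Fin l → ℕ) : Fin n → ℕ :=
  fun i => ∑ k, if ι k = i then g k else 0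

/-- The monomial quasisymmetric function `M_α` in infinitely many variables. -/
noncomputable def MqsFun (α : List ℕ) : MvPowerSeries ℕ ℤ :=
  fun d => if ∃ i : Fin α.length → ℕ, StrictMono i ∧
      d = ∑ t : Fin α.length, Finsupp.single (i t) (α.get t) then 1 else 0

/-- The fundamental quasisymmetric function `F_α` in infinitely many variables. -/
noncomputable def FqsFun (α : List ℕ) : MvPowerSeries ℕ ℤ :=
  ∑ c ∈ (Finset.univ : Finset (Composition α.sum)).filter (fun c => Refines c.blocks α),
    MqsFun c.blocks

/-- The cells of the Young diagram of `lam` (French notation): row `r` (from the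
bottom, 0-indexed) has `lam.get r` cells. -/
abbrev Cells (lam : List ℕ) := Σ r : Fin lam.length, Fin (lam.get r)

/-- A filling of `lam` with entries in `{1, …, n}` (encoded as `Fin n`) is a semistandard
Young tableau: rows weakly increase left to right, columns strictly increase bottom to top. -/
def IsSSYT {n : ℕ} {lam : List ℕ} (T : Cells lam → Fin n) : Prop :=
  (∀ (r : Fin lam.length) (c c' : Fin (lam.get r)), c ≤ c' → T ⟨r, c⟩ ≤ T ⟨r, c'⟩) ∧
  (∀ (r r' : Fin lam.length) (c' : Fin (lam.get r')) (h : (c' : ℕ) < lam.get r),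
      (r : ℕ) < (r' : ℕ) → T ⟨r, ⟨c', h⟩⟩ < T ⟨r', c'⟩)

/-- The weight of a filling: the `v`-th entry counts the occurrences of the value `v`. -/
def wtT {n : ℕ} {lam : List ℕ} (T : Cells lam → Fin n) : Fin n → ℕ :=
  fun v => (Finset.univ.filter (fun x : Cells lam => T x = v)).card

/-- A filling is quasi-Yamanouchi if for every value `v > 1`, the leftmost occurrence of `v`
lies weakly left of some occurrence of `v - 1`. -/
def IsQY {n : ℕ} {lam : List ℕ} (T : Cells lam → Fin n) : Prop :=
  ∀ (v : Fin n) (x : Cells lam), T x = v → 0 < (v : ℕ) →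
    (∀ y : Cells lam, T y = v → (x.2 : ℕ) ≤ (y.2 : ℕ)) →
    ∃ z : Cells lam, (T z : ℕ) + 1 = (v : ℕ) ∧ (x.2 : ℕ) ≤ (z.2 : ℕ)

/-- The Schur polynomial `s_lam(x_1, …, x_n)` as the generating function of
semistandard Young tableaux. -/
noncomputable def schurPoly (n : ℕ) (lam : List ℕ) : MvPolynomial (Fin n) ℤ :=
  ∑ T ∈ (Finset.univ : Finset (Cells lam → Fin n)).filter (fun T => IsSSYT T),
    MvPolynomial.monomial (Finsupp.equivFunOnFinite.symm (wtT T)) 1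

/-- One destandardization step on fillings: for some value `v` occurring in `T` whose
leftmost occurrence is strictly right of every occurrence of `v - 1`, every `v` is
decremented to `v - 1`. -/
def TabStep {n : ℕ} {lam : List ℕ} (T T' : Cells lam → Fin n) : Prop :=
  ∃ v : Fin n, 0 < (v : ℕ) ∧ (∃ x, T x = v) ∧
    (∀ x y : Cells lam, T x = v → (T y : ℕ) + 1 = (v : ℕ) → (y.2 : ℕ) < (x.2 : ℕ)) ∧
    ∀ x : Cells lam, (T' x : ℕ) = if T x = v then (v : ℕ) - 1 else (T x : ℕ)

/-- The reading word of a set of crosses: rows are read from top to bottom, each row from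
left to right, the cross in (0-indexed) row `i` and column `j` recording the letter `i + j`
(representing the simple transposition swapping `i + j` and `i + j + 1` of `{0, 1, 2, …}`). -/
def readWord (P : Finset (ℕ × ℕ)) : List ℕ :=
  ((List.range (P.sup Prod.fst + 1)).reverse).flatMap
    (fun i => ((List.range (P.sup Prod.snd + 1)).filter (fun j => decide ((i, j) ∈ P))).map
      (fun j => i + j))

/-- The permutation `s_{i_ℓ} ⋯ s_{i_1}` associated to the word `(i_1, …, i_ℓ)`,
where `s_k` swaps `k` and `k + 1`. -/
def wordPerm (l : List ℕ) : Equiv.Perm ℕ :=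
  ((l.map (fun k => Equiv.swap k (k + 1))).reverse).prod

/-- A word is reduced if no shorter word has the same product. -/
def IsReducedWord (l : List ℕ) : Prop :=
  ∀ l' : List ℕ, wordPerm l' = wordPerm l → l.length ≤ l'.length

/-- `P` is a reduced pipe dream of shape `w`: the pipes trace out `w` and no two pipes
cross more than once, equivalently the reading word of `P` is a reduced word for `w`. -/
def IsPD (w : Equiv.Perm ℕ) (P : Finset (ℕ × ℕ)) : Prop :=
  wordPerm (readWord P) = w ∧ IsReducedWord (readWord P)

/-- `P` is a quasi-Yamanouchi pipe dream of shape `w`: for every row, the westernmost cross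
is in the first column or lies weakly west of some cross in the row above. -/
def IsQPD (w : Equiv.Perm ℕ) (P : Finset (ℕ × ℕ)) : Prop :=
  IsPD w P ∧ ∀ i j : ℕ, (i, j) ∈ P → (∀ j', (i, j') ∈ P → j ≤ j') →
    (j = 0 ∨ ∃ j', (i + 1, j') ∈ P ∧ j ≤ j')

/-- One destandardization step on pipe dreams: a row with no cross in the first column,
all of whose crosses lie strictly east of every cross in the row above, has all its
crosses moved one step northwest. -/
def PDStep (P P' : Finset (ℕ × ℕ)) : Prop :=
  ∃ r : ℕ, (∃ j, (r, j) ∈ P) ∧ (r, 0) ∉ P ∧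
    (∀ j j', (r, j) ∈ P → (r + 1, j') ∈ P → j' < j) ∧
    P' = P.filter (fun p => p.1 ≠ r) ∪
      (P.filter (fun p => p.1 = r)).image (fun p => (r + 1, p.2 - 1))

/-- The number of crosses of `P` in (0-indexed) row `i`. -/
def rowWt (P : Finset (ℕ × ℕ)) (i : ℕ) : ℕ := (P.filter (fun p => p.1 = i)).card

/-- The weight of a pipe dream, as a weak composition of length `n`. -/
def wtFin (n : ℕ) (P : Finset (ℕ × ℕ)) : Fin n → ℕ := fun i => rowWt P (i : ℕ)

/-- The flattened weight of a pipe dream: the list of nonzero row counts, bottom row first. -/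
def flatWt (P : Finset (ℕ × ℕ)) : List ℕ :=
  ((List.range (P.sup Prod.fst + 1)).map (rowWt P)).filter (fun x => x ≠ 0)

/-- The Schubert polynomial of `w` in the variables `x_1, …, x_n`, as the generating
function of reduced pipe dreams of shape `w`. -/
noncomputable def SchubertPoly (n : ℕ) (w : Equiv.Perm ℕ) : MvPolynomial (Fin n) ℤ :=
  ∑ᶠ P ∈ {P : Finset (ℕ × ℕ) | IsPD w P},
    MvPolynomial.monomial (Finsupp.equivFunOnFinite.symm (wtFin n P)) 1

/-- The Lehmer code of `w` (0-indexed): `lehmer w i` counts `j > i` with `w j < w i`. -/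
noncomputable def lehmer (w : Equiv.Perm ℕ) (i : ℕ) : ℕ :=
  Set.ncard {j : ℕ | i < j ∧ w j < w i}

/-- The Lehmer code of `w` as a weak composition of length `n`. -/
noncomputable def lehmerFin (n : ℕ) (w : Equiv.Perm ℕ) : Fin n → ℕ :=
  fun i => lehmer w (i : ℕ)

/-- The number of inversions of `w`. -/
noncomputable def invCount (w : Equiv.Perm ℕ) : ℕ :=
  Set.ncard {p : ℕ × ℕ | p.1 < p.2 ∧ w p.2 < w p.1}

/-- The largest entry of the Lehmer code of `w`. -/
noncomputable def maxLehmer (w : Equiv.Perm ℕ) : ℕ :=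
  sSup (Set.range (lehmer w))

/-- The (0-indexed) position of the first descent of `w`. -/
noncomputable def firstDescent (w : Equiv.Perm ℕ) : ℕ :=
  sInf {i : ℕ | w (i + 1) < w i}

/-- `δ(w) = 1` if every position attaining `max(L(w))` is at or before the first descent,
and `δ(w) = 0` otherwise. -/
noncomputable def delta (w : Equiv.Perm ℕ) : ℤ :=
  if ∀ i : ℕ, lehmer w i = maxLehmer w → i ≤ firstDescent w then 1 else 0

/-- `η(w) = inv(w) − max(L(w)) + δ(w) − min{i : w_i > w_{i+1}}`. -/
noncomputable def eta (w : Equiv.Perm ℕ) : ℤ :=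
  (invCount w : ℤ) - (maxLehmer w : ℤ) + delta w - ((firstDescent w : ℤ) + 1)

/-- The decomposition of a list into maximal strictly increasing runs. -/
def runsStrict : List ℕ → List (List ℕ)
  | [] => []
  | x :: rest =>
    match runsStrict rest, rest with
    | r :: rs, y :: _ => if x < y then (x :: r) :: rs else [x] :: r :: rs
    | _, _ => [[x]]

/-- The descent composition of a word: lengths of its maximal increasing runs, a new run
beginning whenever a letter is followed by a weakly smaller letter. -/
def desStrict (l : List ℕ) : List ℕ := (runsStrict l).map List.length

/-- The decomposition of a list into maximal weakly increasing runs. -/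
def runsWeak : List ℕ → List (List ℕ)
  | [] => []
  | x :: rest =>
    match runsWeak rest, rest with
    | r :: rs, y :: _ => if x ≤ y then (x :: r) :: rs else [x] :: r :: rs
    | _, _ => [[x]]

/-- The descent composition of a word: the lengths of its maximal weakly increasing runs. -/
def desComp (l : List ℕ) : List ℕ := (runsWeak l).map List.length

/-- The permutation `1^m × w`, fixing `0, …, m-1` and acting by `w` shifted by `m` above. -/
def shiftPerm (m : ℕ) (w : Equiv.Perm ℕ) : Equiv.Perm ℕ where
  toFun i := if i < m then i else w (i - m) + m
  invFun i := if i < m then i else w.symm (i - m) + m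
  left_inv i := by
    dsimp only
    by_cases h : i < m
    · simp [h]
    · have h2 : ¬ (w (i - m) + m < m) := by omega
      rw [if_neg h, if_neg h2, Nat.add_sub_cancel, Equiv.symm_apply_apply]
      omega
  right_inv i := by
    dsimp only
    by_cases h : i < m
    · simp [h]
    · have h2 : ¬ (w.symm (i - m) + m < m) := by omega
      rw [if_neg h, if_neg h2, Nat.add_sub_cancel, Equiv.apply_symm_apply]
      omega

/-- The quasi-shuffle product of two (strong) compositions, as a multiset of compositions. -/
def qShuffle : List ℕ → List ℕ → Multiset (List ℕ)
  | [], β => {β}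
  | α, [] => {α}
  | a :: α, b :: β =>
      ((qShuffle α (b :: β)).map (a :: ·)) + ((qShuffle (a :: α) β).map (b :: ·)) +
        ((qShuffle α β).map ((a + b) :: ·))
termination_by α β => α.length + β.length
decreasing_by all_goals (simp only [List.length_cons]; omega)

def shuffles : List ℕ → List ℕ → Multiset (List ℕ)
  | [], B => {B}
  | A, [] => {A}
  | x :: A, y :: B =>
      ((shuffles A (y :: B)).map (x :: ·)) + ((shuffles (x :: A) B).map (y :: ·))
termination_by A B => A.length + B.length
decreasing_by all_goals (simp only [List.length_cons]; omega)

/-- The word `(2n-1)^{a_1} (2n-3)^{a_2} ⋯ 1^{a_n}` associated to a weak composition `a`. -/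
def wordA {n : ℕ} (a : Fin n → ℕ) : List ℕ :=
  (List.ofFn (fun i : Fin n => List.replicate (a i) (2 * n - 2 * (i : ℕ) - 1))).flatten

/-- The word `(2n)^{b_1} (2n-2)^{b_2} ⋯ 2^{b_n}` associated to a weak composition `b`. -/
def wordB {n : ℕ} (b : Fin n → ℕ) : List ℕ :=
  (List.ofFn (fun i : Fin n => List.replicate (b i) (2 * n - 2 * (i : ℕ)))).flatten

/-- A list (padded with trailing zeros) dominates a weak composition of length `n`. -/
def DominatesList {n : ℕ} (l : List ℕ) (a : Fin n → ℕ) : Prop :=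
  ∀ i : Fin (n + 1), psum a (i : ℕ) ≤ ((l.take (i : ℕ)).sum)

/-- The number of letters of the `A`-word (the odd letters) in the `k`-th weakly
increasing run of `C`. -/
def runCountA (C : List ℕ) (k : Fin (runsWeak C).length) : ℕ :=
  (((runsWeak C).get k).filter (fun z => z % 2 = 1)).length

/-- The number of letters of the `B`-word (the even letters) in the `k`-th weakly
increasing run of `C`. -/
def runCountB (C : List ℕ) (k : Fin (runsWeak C).length) : ℕ :=
  (((runsWeak C).get k).filter (fun z => z % 2 = 0)).length

/-- The length of the `k`-th weakly increasing run of `C`. -/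
def runLen (C : List ℕ) (k : Fin (runsWeak C).length) : ℕ :=
  ((runsWeak C).get k).length

/-- `c = bump_{(a,b)}(C)`: the unique weak composition of length `n` obtained by inserting
zero parts into `Des(C)` so that the correspondingly placed `Des_A` and `Des_B` dominate
`a` and `b`, minimal in dominance order among all such insertions. -/
def IsBumpS {n : ℕ} (a b : Fin n → ℕ) (C : List ℕ) (c : Fin n → ℕ) : Prop :=
  ∃ ι : Fin (runsWeak C).length → Fin n, StrictMono ι ∧
    c = spread ι (runLen C) ∧
    Dominates (spread ι (runCountA C)) a ∧ Dominates (spread ι (runCountB C)) b ∧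
    ∀ ι' : Fin (runsWeak C).length → Fin n, StrictMono ι' →
      Dominates (spread ι' (runCountA C)) a → Dominates (spread ι' (runCountB C)) b →
      Dominates (spread ι' (runLen C)) c

/-- The multiplicity `[c ∣ a ⧢ b]` of `c` in the slide product of `a` and `b`: the number of
shuffles `C` of the words of `a` and `b` lying in the shuffle set `SS(a,b)` with
`bump_{(a,b)}(C) = c`. -/
noncomputable def slideMult {n : ℕ} (a b c : Fin n → ℕ) : ℕ :=
  Multiset.card ((shuffles (wordA a) (wordB b)).filter
    (fun C => DominatesList ((runsWeak C).map
        (fun r => (r.filter (fun z => z % 2 = 1)).length)) a ∧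
      DominatesList ((runsWeak C).map (fun r => (r.filter (fun z => z % 2 = 0)).length)) b ∧
      IsBumpS a b C c))

/-- Membership in the quasi-shuffle set `QSS(a,b)`: a pair `(γ_a, γ_b)` of weak compositions
of a common length at most `n` with `γ_a ≥ a`, `flat(γ_a) = flat(a)`, `γ_b ≥ b`,
`flat(γ_b) = flat(b)` (after padding with trailing zeros), and all entries of
`γ_a + γ_b` positive. -/
def InQSS {n : ℕ} (a b : Fin n → ℕ) (x : (l : ℕ) × (Fin l → ℕ) × (Fin l → ℕ)) : Prop :=
  x.1 ≤ n ∧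
  Dominates (shiftComp 0 n x.2.1) a ∧ flat x.2.1 = flat a ∧
  Dominates (shiftComp 0 n x.2.2) b ∧ flat x.2.2 = flat b ∧
  ∀ k : Fin x.1, 0 < x.2.1 k + x.2.2 k

/-- `c = bump_{(a,b)}(γ_a, γ_b)`: the unique weak composition `c` of length `n` with
`flat(c) = γ_a + γ_b` whose decomposition `c = c_a + c_b` satisfies `c_a ≥ a` and
`c_b ≥ b`, minimal in dominance order among all such compositions. -/
def IsBumpQ {n : ℕ} (a b : Fin n → ℕ) (x : (l : ℕ) × (Fin l → ℕ) × (Fin l → ℕ))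
    (c : Fin n → ℕ) : Prop :=
  ∃ ι : Fin x.1 → Fin n, StrictMono ι ∧
    c = spread ι (fun k => x.2.1 k + x.2.2 k) ∧
    Dominates (spread ι x.2.1) a ∧ Dominates (spread ι x.2.2) b ∧
    ∀ ι' : Fin x.1 → Fin n, StrictMono ι' →
      Dominates (spread ι' x.2.1) a → Dominates (spread ι' x.2.2) b →
      Dominates (spread ι' (fun k => x.2.1 k + x.2.2 k)) c

/-- The multiplicity `[c ∣ a ⧻ b]` of `c` in the quasi-slide product of `a` and `b`: the
number of pairs in the quasi-shuffle set `QSS(a,b)` whose bump is `c`. -/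
noncomputable def qsMult {n : ℕ} (a b c : Fin n → ℕ) : ℕ :=
  Nat.card {x : (l : ℕ) × (Fin l → ℕ) × (Fin l → ℕ) // InQSS a b x ∧ IsBumpQ a b x c}

/-- The Stanley symmetric function `S_w`. -/
noncomputable def StanleySym (w : Equiv.Perm ℕ) : MvPowerSeries ℕ ℤ :=
  ∑ᶠ l ∈ {l : List ℕ | wordPerm l = w ∧ IsReducedWord l}, FqsFun (desStrict l)

/-! ### Auxiliary lemmas for Statement 2 -/

section Aux

variable {n : ℕ}

private lemma filter_ne_zero_sum (l : List ℕ) :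
    (l.filter (fun x => x ≠ 0)).sum = l.sum := by
  induction l with
  | nil => rfl
  | cons a l ih =>
    rw [List.filter_cons]
    split
    · rw [List.sum_cons, List.sum_cons, ih]
    · next hcond =>
        have ha : a = 0 := by simpa using hcond
        rw [ih, List.sum_cons, ha, Nat.zero_add]

lemma sum_flat (a : Fin n → ℕ) : (flat a).sum = ∑ i, a i := by
  rw [flat, filter_ne_zero_sum, List.sum_ofFn]

lemma flat_pos (a : Fin n → ℕ) {x : ℕ} (hx : x ∈ flat a) : x ≠ 0 := by
  rw [flat, List.mem_filter] at hx
  simpa using hx.2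

lemma refines_sum {β α : List ℕ} (h : Refines β α) : β.sum = α.sum := by
  obtain ⟨L, h1, h2⟩ := h
  rw [← h1, ← h2, List.sum_flatten]

lemma psum_mono (a : Fin n → ℕ) {i j : ℕ} (h : i ≤ j) : psum a i ≤ psum a j := by
  apply Finset.sum_le_sum_of_subset
  intro t ht
  simp only [Finset.mem_filter, Finset.mem_univ, true_and] at ht ⊢
  omega

lemma psum_succ (a : Fin n → ℕ) {i : ℕ} (h : i < n) :
    psum a (i + 1) = psum a i + a ⟨i, h⟩ := by
  have hset : (Finset.univ.filter (fun j : Fin n => (j : ℕ) < i + 1))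
      = insert (⟨i, h⟩ : Fin n) (Finset.univ.filter (fun j : Fin n => (j : ℕ) < i)) := by
    ext j
    simp only [Finset.mem_filter, Finset.mem_univ, true_and, Finset.mem_insert, Fin.ext_iff]
    omega
  rw [psum, hset, Finset.sum_insert (by simp), psum]
  exact Nat.add_comm _ _

lemma psum_of_ge (a : Fin n → ℕ) {i : ℕ} (h : n ≤ i) : psum a i = ∑ j, a j := by
  rw [psum, Finset.filter_true_of_mem]
  intro x _
  exact lt_of_lt_of_le x.isLt h

lemma dominates_iff {b a : Fin n → ℕ} :
    Dominates b a ↔ ∀ i : ℕ, psum a i ≤ psum b i := by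
  constructor
  · intro hd i
    rcases le_or_gt i n with h | h
    · exact hd ⟨i, by omega⟩
    · rw [psum_of_ge a (le_of_lt h), psum_of_ge b (le_of_lt h),
        ← psum_of_ge a (le_refl n), ← psum_of_ge b (le_refl n)]
      exact hd ⟨n, by omega⟩
  · intro h i
    exact h i

lemma eq_of_psum_eq {b c : Fin n → ℕ} (h : ∀ i : ℕ, psum b i = psum c i) : b = c := by
  funext i
  have h2 := h ((i : ℕ) + 1)
  rw [psum_succ b i.isLt, psum_succ c i.isLt, h (i : ℕ)] at h2
  simp only [Fin.eta] at h2
  omega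

lemma mem_wcFinset {k : ℕ} {d : Fin n → ℕ} : d ∈ wcFinset n k ↔ ∀ i, d i ≤ k := by
  simp [wcFinset, Fintype.mem_piFinset, Finset.mem_range, Nat.lt_succ_iff]

lemma mem_wcFinset_of_sum {k : ℕ} {d : Fin n → ℕ} (h : ∑ i, d i = k) :
    d ∈ wcFinset n k := by
  rw [mem_wcFinset]
  intro i
  rw [← h]
  exact Finset.single_le_sum (fun _ _ => Nat.zero_le _) (Finset.mem_univ i)

lemma spread_apply_ne {m : ℕ} (ι : Fin m → Fin n) (g : Fin m → ℕ) (i : Fin n)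
    (h : ∀ t, ι t ≠ i) : spread ι g i = 0 := by
  apply Finset.sum_eq_zero
  intro t _
  simp [h t]

lemma psum_spread {m : ℕ} (ι : Fin m → Fin n) (g : Fin m → ℕ) (i : ℕ) :
    psum (spread ι g) i
      = ∑ t ∈ Finset.univ.filter (fun t : Fin m => ((ι t : ℕ) < i)), g t := by
  rw [psum]
  simp only [spread]
  rw [Finset.sum_comm]
  conv_rhs => rw [Finset.sum_filter]
  apply Finset.sum_congr rfl
  intro t _
  rw [Finset.sum_ite_eq]
  simp

lemma mem_filter_lt_iff {m : ℕ} (S : Finset (Fin m))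
    (hS : ∀ t t' : Fin m, t' ≤ t → t ∈ S → t' ∈ S) (t : Fin m) :
    t ∈ S ↔ (t : ℕ) < S.card := by
  constructor
  · intro ht
    have hsub : Finset.Iic t ⊆ S := fun t' ht' => hS t t' (Finset.mem_Iic.mp ht') ht
    have := Finset.card_le_card hsub
    rw [Fin.card_Iic] at this
    omega
  · intro ht
    by_contra hmem
    have hsub : S ⊆ Finset.Iio t := by
      intro t' ht'
      rw [Finset.mem_Iio]
      by_contra h'
      exact hmem (hS t' t (le_of_not_gt h') ht')
    have := Finset.card_le_card hsub
    rw [Fin.card_Iio] at this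
    omega

lemma psum_spread_sm {m : ℕ} {ι : Fin m → Fin n} (hι : StrictMono ι) (g : Fin m → ℕ)
    (i : ℕ) :
    psum (spread ι g) i
      = psum g ((Finset.univ.filter fun t : Fin m => ((ι t : ℕ) < i)).card) := by
  rw [psum_spread, psum]
  apply Finset.sum_congr _ (fun _ _ => rfl)
  have hdc : ∀ t t' : Fin m, t' ≤ t →
      t ∈ (Finset.univ.filter fun t : Fin m => ((ι t : ℕ) < i)) →
      t' ∈ (Finset.univ.filter fun t : Fin m => ((ι t : ℕ) < i)) := by
    intro t t' hle ht
    simp only [Finset.mem_filter, Finset.mem_univ, true_and] at ht ⊢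
    have hc : (ι t' : ℕ) ≤ (ι t : ℕ) := hι.monotone hle
    omega
  ext t
  have hmemiff := mem_filter_lt_iff _ hdc t
  simp only [Finset.mem_filter, Finset.mem_univ, true_and] at hmemiff ⊢
  rw [hmemiff]

lemma psum_meet {m : ℕ} {ι κ μ : Fin m → Fin n} (hι : StrictMono ι) (hκ : StrictMono κ)
    (hμ : ∀ t, μ t = max (ι t) (κ t)) (g : Fin m → ℕ) (i : ℕ) :
    psum (spread μ g) i = min (psum (spread ι g) i) (psum (spread κ g) i) := by
  have hμm : StrictMono μ := by
    intro s t h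
    rw [hμ, hμ]
    exact max_lt_max (hι h) (hκ h)
  rw [psum_spread_sm hι, psum_spread_sm hκ, psum_spread_sm hμm]
  set S1 := Finset.univ.filter fun t : Fin m => ((ι t : ℕ) < i) with hS1
  set S2 := Finset.univ.filter fun t : Fin m => ((κ t : ℕ) < i) with hS2
  have hd1 : ∀ t t' : Fin m, t' ≤ t → t ∈ S1 → t' ∈ S1 := by
    intro t t' hle ht
    rw [hS1, Finset.mem_filter] at ht ⊢
    have hc : (ι t' : ℕ) ≤ (ι t : ℕ) := hι.monotone hle
    exact ⟨Finset.mem_univ _, by omega⟩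
  have hd2 : ∀ t t' : Fin m, t' ≤ t → t ∈ S2 → t' ∈ S2 := by
    intro t t' hle ht
    rw [hS2, Finset.mem_filter] at ht ⊢
    have hc : (κ t' : ℕ) ≤ (κ t : ℕ) := hκ.monotone hle
    exact ⟨Finset.mem_univ _, by omega⟩
  have hc1 := mem_filter_lt_iff S1 hd1
  have hc2 := mem_filter_lt_iff S2 hd2
  have hval : ∀ t : Fin m, ((μ t : Fin n) : ℕ) = max ((ι t : ℕ)) ((κ t : ℕ)) := by
    intro t
    rw [hμ t]
    exact Monotone.map_max (fun _ _ h => h)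
  have hfil : (Finset.univ.filter fun t : Fin m => ((μ t : ℕ) < i)) = S1 ∩ S2 := by
    ext t
    rw [Finset.mem_inter, hS1, hS2]
    simp only [Finset.mem_filter, Finset.mem_univ, true_and, hval t, Nat.max_lt]
  rw [hfil]
  rcases le_total S1.card S2.card with h | h
  · have hsub : S1 ⊆ S2 := fun t ht => (hc2 t).mpr (lt_of_lt_of_le ((hc1 t).mp ht) h)
    rw [(Finset.inter_eq_left).mpr hsub]
    exact (min_eq_left (psum_mono g h)).symm
  · have hsub : S2 ⊆ S1 := fun t ht => (hc1 t).mpr (lt_of_lt_of_le ((hc2 t).mp ht) h)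
    rw [(Finset.inter_eq_right).mpr hsub]
    exact (min_eq_right (psum_mono g h)).symm

private lemma pred_eq_iff {x : Fin (n + 1)} (hx : x ≠ 0) (i : Fin n) :
    x.pred hx = i ↔ x = i.succ := by
  constructor
  · intro h
    rw [← h, Fin.succ_pred]
  · intro h
    subst h
    rw [Fin.pred_succ]

lemma flat_zero : flat (fun _ : Fin n => 0) = [] := by
  rw [flat, List.filter_eq_nil_iff]
  intro x hx
  rw [List.mem_ofFn] at hx
  obtain ⟨t, rfl⟩ := hx
  simp

lemma flat_spread : ∀ {n m : ℕ} (ι : Fin m → Fin n), StrictMono ι →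
    ∀ g : Fin m → ℕ, (∀ t, g t ≠ 0) → flat (spread ι g) = List.ofFn g := by
  intro n
  induction n with
  | zero =>
    intro m ι _ g _
    cases m with
    | zero => rw [flat, List.ofFn_zero, List.filter_nil, List.ofFn_zero]
    | succ k => exact (ι 0).elim0
  | succ n IH =>
    intro m ι hι g hg
    cases m with
    | zero =>
      have h1 : spread ι g = fun _ : Fin (n + 1) => 0 :=
        funext fun i => spread_apply_ne ι g i (fun t => t.elim0)
      rw [h1, flat_zero, List.ofFn_zero]
    | succ k =>
      by_cases h0 : ι 0 = 0
      · have hpos : ∀ t : Fin k, ι t.succ ≠ 0 := by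
          intro t
          have hlt : ι 0 < ι t.succ := hι (Fin.succ_pos t)
          rw [h0] at hlt
          exact (Fin.pos_iff_ne_zero).mp hlt
        have hι' : StrictMono (fun t : Fin k => (ι t.succ).pred (hpos t)) := by
          intro s t hst
          have h1 : ι s.succ < ι t.succ := hι (Fin.succ_lt_succ_iff.mpr hst)
          have hs' : 0 < (ι s.succ : ℕ) := by
            have := Fin.pos_iff_ne_zero.mpr (hpos s)
            rwa [Fin.lt_def, Fin.val_zero] at this
          rw [Fin.lt_def] at h1 ⊢
          rw [Fin.coe_pred, Fin.coe_pred]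
          omega
        have hb0 : spread ι g 0 = g 0 := by
          simp only [spread]
          rw [Fin.sum_univ_succ, if_pos h0]
          have hz : ∀ t : Fin k, (if ι t.succ = 0 then g t.succ else 0) = 0 :=
            fun t => if_neg (hpos t)
          simp [hz]
        have htail : (fun i : Fin n => spread ι g i.succ)
            = spread (fun t : Fin k => (ι t.succ).pred (hpos t)) (fun t => g t.succ) := by
          funext i
          simp only [spread]
          rw [Fin.sum_univ_succ, if_neg (by rw [h0]; exact (Fin.succ_ne_zero i).symm)]
          rw [Nat.zero_add]
          apply Finset.sum_congr rfl
          intro t _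
          exact if_congr ((pred_eq_iff (hpos t) i).symm) rfl rfl
        have step1 : flat (spread ι g) = g 0 :: flat (fun i : Fin n => spread ι g i.succ) := by
          rw [flat, flat, List.ofFn_succ, List.filter_cons, hb0, if_pos (by simpa using hg 0)]
        rw [step1, htail, IH _ hι' _ (fun t => hg t.succ), List.ofFn_succ]
      · have hpos : ∀ t : Fin (k + 1), ι t ≠ 0 := by
          intro t
          have h1 : ι 0 ≤ ι t := hι.monotone (Fin.zero_le t)
          have h2 : 0 < ι 0 := Fin.pos_iff_ne_zero.mpr h0
          exact Fin.pos_iff_ne_zero.mp (lt_of_lt_of_le h2 h1)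
        have hι' : StrictMono (fun t : Fin (k + 1) => (ι t).pred (hpos t)) := by
          intro s t hst
          have h1 : ι s < ι t := hι hst
          have hs' : 0 < (ι s : ℕ) := by
            have := Fin.pos_iff_ne_zero.mpr (hpos s)
            rwa [Fin.lt_def, Fin.val_zero] at this
          rw [Fin.lt_def] at h1 ⊢
          rw [Fin.coe_pred, Fin.coe_pred]
          omega
        have hb0 : spread ι g 0 = 0 := spread_apply_ne ι g 0 hpos
        have htail : (fun i : Fin n => spread ι g i.succ)
            = spread (fun t : Fin (k + 1) => (ι t).pred (hpos t)) g := by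
          funext i
          simp only [spread]
          apply Finset.sum_congr rfl
          intro t _
          exact if_congr ((pred_eq_iff (hpos t) i).symm) rfl rfl
        have step1 : flat (spread ι g) = flat (fun i : Fin n => spread ι g i.succ) := by
          rw [flat, flat, List.ofFn_succ, List.filter_cons, hb0]
          simp
        rw [step1, htail, IH _ hι' _ hg]

lemma exists_rep : ∀ {n : ℕ} (b : Fin n → ℕ) (β : List ℕ), flat b = β →
    ∃ ι : Fin β.length → Fin n, StrictMono ι ∧ b = spread ι (fun t => β.get t) := by
  intro n
  induction n with
  | zero =>
    intro b β hβ
    have hβnil : β = [] := by rw [← hβ, flat, List.ofFn_zero, List.filter_nil]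
    subst hβnil
    refine ⟨fun t => t.elim0, fun t => t.elim0, funext fun i => i.elim0⟩
  | succ n IH =>
    intro b β hβ
    by_cases h0 : b 0 = 0
    · have hflat : flat (fun i : Fin n => b i.succ) = β := by
        rw [← hβ, flat, flat, List.ofFn_succ, List.filter_cons, h0]
        simp
      obtain ⟨ι', hι', hsp⟩ := IH (fun i => b i.succ) β hflat
      refine ⟨fun t => (ι' t).succ, fun s t h => Fin.succ_lt_succ_iff.mpr (hι' h), ?_⟩
      funext i
      refine Fin.cases ?_ ?_ i
      · rw [spread_apply_ne _ _ 0 (fun t => Fin.succ_ne_zero (ι' t))]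
        exact h0
      · intro j
        have hr : spread (fun t => (ι' t).succ) (fun t => β.get t) j.succ
            = spread ι' (fun t => β.get t) j := by
          simp only [spread]
          apply Finset.sum_congr rfl
          intro t _
          exact if_congr Fin.succ_inj rfl rfl
        rw [hr, ← hsp]
    · cases β with
      | nil =>
        exfalso
        rw [flat, List.ofFn_succ, List.filter_cons, if_pos (by simpa using h0)] at hβ
        exact List.cons_ne_nil _ _ hβ
      | cons x β' =>
        have hcons : b 0 :: flat (fun i : Fin n => b i.succ) = x :: β' := by
          rw [← hβ, flat, flat, List.ofFn_succ, List.filter_cons, if_pos (by simpa using h0)]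
        have hx : x = b 0 := (List.cons.inj hcons).1.symm
        have hfl : flat (fun i : Fin n => b i.succ) = β' := (List.cons.inj hcons).2
        obtain ⟨ι', hι', hsp⟩ := IH (fun i => b i.succ) β' hfl
        simp only [List.length_cons]
        refine ⟨Fin.cases 0 (fun t => (ι' t).succ), ?_, ?_⟩
        · intro s t hst
          dsimp only
          obtain ⟨u, rfl⟩ : ∃ u : Fin β'.length, t = u.succ := by
            rcases Fin.eq_zero_or_eq_succ t with rfl | h
            · exact absurd (lt_of_le_of_lt (Fin.zero_le s) hst) (lt_irrefl 0)
            · exact h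
          rcases Fin.eq_zero_or_eq_succ s with rfl | ⟨v, rfl⟩
          · rw [Fin.cases_zero, Fin.cases_succ]
            exact Fin.succ_pos _
          · rw [Fin.cases_succ, Fin.cases_succ]
            exact Fin.succ_lt_succ_iff.mpr (hι' (Fin.succ_lt_succ_iff.mp hst))
        · funext i
          refine Fin.cases ?_ ?_ i
          · simp only [spread]
            rw [Fin.sum_univ_succ, Fin.cases_zero, if_pos rfl]
            have hz : ∀ t : Fin β'.length,
                (if Fin.cases (motive := fun _ => Fin (n + 1)) 0
                    (fun t => (ι' t).succ) t.succ = 0 then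
                  (x :: β').get t.succ else 0) = 0 := by
              intro t
              rw [Fin.cases_succ]
              exact if_neg (Fin.succ_ne_zero _)
            simp only [hz, Finset.sum_const_zero, Nat.add_zero]
            exact hx.symm
          · intro j
            have hr : spread (Fin.cases 0 (fun t => (ι' t).succ)) (fun t => (x :: β').get t)
                j.succ = spread ι' (fun t => β'.get t) j := by
              simp only [spread]
              rw [Fin.sum_univ_succ, Fin.cases_zero,
                if_neg ((Fin.succ_ne_zero j).symm), Nat.zero_add]
              apply Finset.sum_congr rfl
              intro t _
              rw [Fin.cases_succ]
              exact if_congr Fin.succ_inj rfl rfl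
            rw [hr, ← hsp]

lemma meet_exists {b c : Fin n → ℕ} {β : List ℕ} (hb : flat b = β) (hc : flat c = β) :
    ∃ d : Fin n → ℕ, flat d = β ∧ ∀ i, psum d i = min (psum b i) (psum c i) := by
  obtain ⟨ι, hι, hbs⟩ := exists_rep b β hb
  obtain ⟨κ, hκ, hcs⟩ := exists_rep c β hc
  refine ⟨spread (fun t => max (ι t) (κ t)) (fun t => β.get t), ?_, ?_⟩
  · rw [flat_spread _ (fun s t h => max_lt_max (hι h) (hκ h)) _ ?_]
    · exact List.ofFn_get β
    · intro t
      apply flat_pos b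
      rw [hb]
      exact List.get_mem β _
  · intro i
    rw [hbs, hcs]
    exact psum_meet hι hκ (fun t => rfl) _ i

lemma min_list (a : Fin n → ℕ) (β : List ℕ) (l : List (Fin n → ℕ)) :
    ∀ c : Fin n → ℕ, Dominates c a → flat c = β →
    ∃ m : Fin n → ℕ, Dominates m a ∧ flat m = β ∧ (∀ i, psum m i ≤ psum c i) ∧
      ∀ d ∈ l, Dominates d a → flat d = β → ∀ i, psum m i ≤ psum d i := by
  induction l with
  | nil => exact fun c h1 h2 => ⟨c, h1, h2, fun i => le_refl _, by simp⟩
  | cons d l IH =>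
    intro c h1 h2
    obtain ⟨m, hm1, hm2, hm3, hm4⟩ := IH c h1 h2
    by_cases hd : Dominates d a ∧ flat d = β
    · obtain ⟨m', hm'1, hm'2⟩ := meet_exists hm2 hd.2
      refine ⟨m', ?_, hm'1, ?_, ?_⟩
      · rw [dominates_iff]
        intro i
        rw [hm'2 i]
        exact le_min (dominates_iff.mp hm1 i) (dominates_iff.mp hd.1 i)
      · intro i
        rw [hm'2 i]
        exact le_trans (min_le_left _ _) (hm3 i)
      · intro e he hea heβ i
        rcases List.mem_cons.mp he with rfl | he'
        · rw [hm'2 i]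
          exact min_le_right _ _
        · rw [hm'2 i]
          exact le_trans (min_le_left _ _) (hm4 e he' hea heβ i)
    · refine ⟨m, hm1, hm2, hm3, ?_⟩
      intro e he hea heβ i
      rcases List.mem_cons.mp he with rfl | he'
      · exact absurd ⟨hea, heβ⟩ hd
      · exact hm4 e he' hea heβ i

lemma exists_min (a : Fin n → ℕ) {c : Fin n → ℕ} (h1 : Dominates c a) :
    ∃ m : Fin n → ℕ, Dominates m a ∧ flat m = flat c ∧ Dominates c m ∧
      ∀ d : Fin n → ℕ, Dominates d a → flat d = flat c → Dominates d m := by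
  obtain ⟨m, hm1, hm2, hm3, hm4⟩ :=
    min_list a (flat c) (wcFinset n (flat c).sum).toList c h1 rfl
  refine ⟨m, hm1, hm2, dominates_iff.mpr hm3, ?_⟩
  intro d hd1 hd2
  have hdmem : d ∈ (wcFinset n (flat c).sum).toList := by
    rw [Finset.mem_toList]
    apply mem_wcFinset_of_sum
    rw [← sum_flat d, hd2]
  exact dominates_iff.mpr (hm4 d hdmem hd1 hd2)

end Aux

/-- `𝔉_a = Σ_b 𝔐_b` over weak compositions `b` of length `n` strongly
dominating `a` with `flat(b)` refining `flat(a)`. -/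
theorem fundamentalSlide_eq_sum_monomialSlide {n : ℕ} (a : Fin n → ℕ) :
    slideF a = ∑ b ∈ (wcFinset n (∑ i, a i)).filter
        (fun b => StronglyDominates b a ∧ Refines (flat b) (flat a)),
      slideM b := by
  have hsum : ∀ c : Fin n → ℕ, Refines (flat c) (flat a) → ∑ i, c i = ∑ i, a i := by
    intro c hc
    rw [← sum_flat c, ← sum_flat a]
    exact refines_sum hc
  have key : (wcFinset n (∑ i, a i)).filter
        (fun c => Dominates c a ∧ Refines (flat c) (flat a))
      = ((wcFinset n (∑ i, a i)).filter
          (fun b => StronglyDominates b a ∧ Refines (flat b) (flat a))).biUnion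
        (fun b => (wcFinset n (∑ i, b i)).filter
          (fun c => Dominates c b ∧ flat c = flat b)) := by
    ext c
    simp only [Finset.mem_biUnion, Finset.mem_filter]
    constructor
    · rintro ⟨hcw, hcd, hcr⟩
      obtain ⟨m, hm1, hm2, hm3, hm4⟩ := exists_min a hcd
      have hms : ∑ i, m i = ∑ i, a i := by
        rw [← sum_flat m, hm2, sum_flat c]
        exact hsum c hcr
      refine ⟨m, ⟨mem_wcFinset_of_sum hms, ⟨hm1, ?_⟩, ?_⟩, ?_, hm3, hm2.symm⟩
      · intro c' hc'd hc'f
        exact hm4 c' hc'd (hc'f.trans hm2)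
      · rw [hm2]
        exact hcr
      · rw [hms]
        exact hcw
    · rintro ⟨b, ⟨hbw, ⟨hbd, hbstrong⟩, hbr⟩, hcw, hcd, hcf⟩
      refine ⟨?_, ?_, ?_⟩
      · rw [← hsum b hbr]
        exact hcw
      · intro i
        exact le_trans (hbd i) (hcd i)
      · rw [hcf]
        exact hbr
  have hdisj : (↑((wcFinset n (∑ i, a i)).filter
        (fun b => StronglyDominates b a ∧ Refines (flat b) (flat a))) :
          Set (Fin n → ℕ)).PairwiseDisjoint
      (fun b => (wcFinset n (∑ i, b i)).filter
        (fun c => Dominates c b ∧ flat c = flat b)) := by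
    intro b1 hb1 b2 hb2 hne
    rw [Finset.mem_coe, Finset.mem_filter] at hb1 hb2
    rw [Function.onFun, Finset.disjoint_left]
    intro c hc1 hc2
    rw [Finset.mem_filter] at hc1 hc2
    have hf : flat b2 = flat b1 := hc2.2.2.symm.trans hc1.2.2
    have h21 : Dominates b2 b1 := hb1.2.1.2 b2 hb2.2.1.1 hf
    have h12 : Dominates b1 b2 := hb2.2.1.2 b1 hb1.2.1.1 hf.symm
    exact hne (eq_of_psum_eq fun i =>
      le_antisymm (dominates_iff.mp h21 i) (dominates_iff.mp h12 i))
  unfold slideF slideM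
  rw [key, Finset.sum_biUnion hdisj]

end SlidePaper
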